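/- Let 0 ≤ η < 1/2 and G(z) = (1/4)z⁴ + 2ηz³ + 4η²z² − z². If v ∈ (0, v₀) with v₀ = √(−G(√(η²+2)−3η)) and y(v) is the smallest positive root of G(z) + v² = 0, then G'(y(v))·y(v) + 2v² = (1/2)y(v)⁴ + 2η·y(v)³ > 0. -/

import Mathlib

theorem deriv_at_yv_identity (η : ℝ) (hη0 : 0 ≤ η) (hη : η < 1/2)
    (G : ℝ → ℝ) (hG : ∀ z, G z = (1/4) * z^4 + 2*η*z^3 + 4*η^2*z^2 - z^2)
    (v₀ : ℝ) (hv₀ : v₀ = Real.sqrt (-(G (Real.sqrt (η^2 + 2) - 3*η))))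
    (v : ℝ) (hv : v ∈ Set.Ioo 0 v₀)
    (yv : ℝ) (hyv : IsLeast {z : ℝ | 0 < z ∧ G z + v^2 = 0} yv) :
    deriv G yv * yv + 2*v^2 = (1/2) * yv^4 + 2*η*yv^3 ∧
      (0 : ℝ) < (1/2) * yv^4 + 2*η*yv^3 := by
  obtain ⟨⟨hypos, hroot⟩, -⟩ := hyv
  have hGf : G = fun z => (1/4) * z^4 + 2*η*z^3 + 4*η^2*z^2 - z^2 := funext hG
  subst hGf
  have hD : HasDerivAt (fun z : ℝ => (1/4) * z^4 + 2*η*z^3 + 4*η^2*z^2 - z^2)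
      (yv^3 + 6*η*yv^2 + 8*η^2*yv - 2*yv) yv := by
    have h4 := (hasDerivAt_pow 4 yv).const_mul ((1:ℝ)/4)
    have h3 := (hasDerivAt_pow 3 yv).const_mul (2*η)
    have h2 := (hasDerivAt_pow 2 yv).const_mul (4*η^2)
    have h2' := hasDerivAt_pow 2 yv
    have := ((h4.add h3).add h2).sub h2'
    exact this.congr_deriv (by simp only [Nat.reduceSub, Nat.cast_ofNat]; ring)
  have hderiv := hD.deriv
  simp only [Set.mem_setOf_eq] at hroot
  constructor
  · rw [hderiv]; nlinarith [hroot]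
  · nlinarith [pow_pos hypos 4, pow_pos hypos 3, mul_nonneg hη0 (pow_pos hypos 3).le]
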